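/- arXiv:2012.08558 — 3 statements merged into one kernel-verified Lean document; each statement's English description precedes it below -/
import Mathlib

section
/- For every positive integer k and every complex z with |z| > 0 and Re(z) > 0, ∑_{j=0}^{k} z^j/j! = (1/k!) ∫_0^1 (z - log u)^k du. -/
open MeasureTheory Complex

lemma exp_neg_image_aux' : (fun x : ℝ => Real.exp (-x)) '' Set.Ioi 0 = Set.Ioo (0 : ℝ) 1 := by
  ext x
  constructor
  · rintro ⟨t, ht, rfl⟩
    exact ⟨Real.exp_pos _, Real.exp_lt_one_iff.mpr (neg_neg_iff_pos.mpr ht)⟩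
  · rintro ⟨hx0, hx1⟩
    exact ⟨-Real.log x, neg_pos.mpr (Real.log_neg hx0 hx1), by
      simp [Real.exp_log hx0]⟩

lemma integrable_aux' (m : ℕ) :
    IntegrableOn (fun x : ℝ => Real.exp (-x) * x ^ m) (Set.Ioi 0) := by
  have h := Real.GammaIntegral_convergent (s := (m : ℝ) + 1) (by positivity)
  refine h.congr_fun (fun x hx => ?_) measurableSet_Ioi
  have : ((m : ℝ) + 1) - 1 = (m : ℝ) := by ring
  rw [this]
  simp only [Real.rpow_natCast]

lemma gamma_aux' (m : ℕ) :
    ∫ x in Set.Ioi (0 : ℝ), Real.exp (-x) * x ^ m = (m.factorial : ℝ) := by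
  have h := Real.Gamma_eq_integral (s := (m : ℝ) + 1) (by positivity)
  have h2 : ∫ x in Set.Ioi (0 : ℝ), Real.exp (-x) * x ^ (((m : ℝ) + 1) - 1)
      = ∫ x in Set.Ioi (0 : ℝ), Real.exp (-x) * x ^ m := by
    refine setIntegral_congr_fun measurableSet_Ioi (fun x hx => ?_)
    have : ((m : ℝ) + 1) - 1 = (m : ℝ) := by ring
    rw [this, Real.rpow_natCast]
  rw [h2] at h
  rw [← h, Real.Gamma_nat_eq_factorial]

lemma gamma_aux_c (m : ℕ) :
    ∫ x in Set.Ioi (0 : ℝ), ((Real.exp (-x) * x ^ m : ℝ) : ℂ) = (m.factorial : ℂ) := by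
  have cc : ∀ r : ℝ, (r : ℂ) = RCLike.ofReal r := fun r => rfl
  simp_rw [cc]
  rw [integral_ofReal, gamma_aux']
  norm_num

lemma key_aux (k : ℕ) (z : ℂ) :
    ∫ u in Set.Ioo (0 : ℝ) 1, (z - (Real.log u : ℂ)) ^ k
      = ∑ j ∈ Finset.range (k + 1),
          z ^ j * (k.choose j : ℂ) * ((k - j).factorial : ℂ) := by
  have hderiv : ∀ x ∈ Set.Ioi (0 : ℝ),
      HasDerivWithinAt (fun x : ℝ => Real.exp (-x)) (-Real.exp (-x)) (Set.Ioi 0) x := by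
    intro x _
    exact (((Real.hasDerivAt_exp (-x)).comp x (hasDerivAt_neg x)).hasDerivWithinAt
      (s := Set.Ioi 0)).congr_deriv (by ring)
  have hinj : Set.InjOn (fun x : ℝ => Real.exp (-x)) (Set.Ioi 0) :=
    (Real.exp_injective.comp neg_injective).injOn
  rw [← exp_neg_image_aux', integral_image_eq_integral_abs_deriv_smul measurableSet_Ioi
    hderiv hinj]
  have h1 : ∀ x ∈ Set.Ioi (0 : ℝ),
      |(-Real.exp (-x))| • (z - (Real.log (Real.exp (-x)) : ℂ)) ^ k
        = ∑ j ∈ Finset.range (k + 1),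
            (z ^ j * (k.choose j : ℂ)) * ((Real.exp (-x) * x ^ (k - j) : ℝ) : ℂ) := by
    intro x _
    rw [abs_neg, abs_of_pos (Real.exp_pos _), Real.log_exp]
    push_cast
    rw [sub_neg_eq_add, add_pow]
    rw [Finset.smul_sum]
    refine Finset.sum_congr rfl (fun j _ => ?_)
    rw [Complex.real_smul]
    push_cast
    ring
  rw [setIntegral_congr_fun measurableSet_Ioi h1]
  rw [integral_finset_sum]
  · refine Finset.sum_congr rfl (fun j _ => ?_)
    rw [integral_const_mul, gamma_aux_c]
  · intro j _
    exact (((integrable_aux' (k - j)).ofReal (𝕜 := ℂ))).const_mul _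

theorem stmt2 (k : ℕ) (hk : 0 < k) (z : ℂ) (hz : 0 < ‖z‖) (hre : 0 < z.re) :
    ∑ j ∈ Finset.range (k + 1), z ^ j / (Nat.factorial j : ℂ) =
      (1 / (Nat.factorial k : ℂ)) *
        ∫ u in Set.Ioo (0 : ℝ) 1, (z - (Real.log u : ℂ)) ^ k := by
  rw [key_aux, Finset.mul_sum]
  refine Finset.sum_congr rfl (fun j hj => ?_)
  have hjk : j ≤ k := Nat.lt_succ_iff.mp (Finset.mem_range.mp hj)
  have hfac : (k.choose j : ℂ) * (j.factorial : ℂ) * ((k - j).factorial : ℂ)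
      = (k.factorial : ℂ) := by
    exact_mod_cast congrArg (Nat.cast : ℕ → ℂ)
      (Nat.choose_mul_factorial_mul_factorial hjk)
  have hj0 : (j.factorial : ℂ) ≠ 0 := Nat.cast_ne_zero.mpr j.factorial_ne_zero
  have hk0 : (k.factorial : ℂ) ≠ 0 := Nat.cast_ne_zero.mpr k.factorial_ne_zero
  field_simp
  rw [← hfac]
  ring
end

section
/- For every positive real m, the improper integral ∫_0^1 [ -(2π/m)(1-u) cot(π u) + 2/(m u) ] du converges and equals (2 log 2π)/m. -/
open MeasureTheory Real Filter Set
open scoped Topology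

lemma sin_pos' {u : ℝ} (h0 : 0 < u) (h1 : u < 1) : 0 < Real.sin (π*u) :=
  Real.sin_pos_of_pos_of_lt_pi (by positivity) (by nlinarith [Real.pi_pos])

lemma sin_lb {u : ℝ} (h0 : 0 < u) (h1 : u < 1) : 2*u*(1-u) ≤ Real.sin (π*u) := by
  rcases le_or_gt u (1/2) with h | h
  · have := Real.mul_le_sin (x := π*u) (by positivity) (by nlinarith [Real.pi_pos])
    have hπ := Real.pi_pos
    have : 2*u ≤ Real.sin (π*u) := by
      rw [div_mul_eq_mul_div, mul_comm] at this
      calc 2*u = π*u*2/π := by field_simp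
        _ ≤ _ := this
    nlinarith
  · have h2 : Real.sin (π*(1-u)) = Real.sin (π*u) := by
      rw [show π*(1-u) = π - π*u by ring, Real.sin_pi_sub]
    have := Real.mul_le_sin (x := π*(1-u)) (by nlinarith [Real.pi_pos]) (by nlinarith [Real.pi_pos])
    have hπ := Real.pi_pos
    have h3 : 2*(1-u) ≤ Real.sin (π*u) := by
      rw [h2] at this
      calc 2*(1-u) = π*(1-u)*2/π := by field_simp
        _ ≤ _ := by rw [div_mul_eq_mul_div, mul_comm] at this; exact this
    nlinarith

lemma neg_log_le {x : ℝ} (hx : 0 < x) : -Real.log x ≤ 2 * x ^ (-(1/2:ℝ)) := by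
  have h1 : Real.log (x ^ (-(1/2:ℝ))) = -(1/2) * Real.log x := Real.log_rpow hx _
  have h2 : (0:ℝ) < x ^ (-(1/2:ℝ)) := Real.rpow_pos_of_pos hx _
  have h3 := Real.log_le_sub_one_of_pos h2
  nlinarith

lemma integrable_bnd : IntegrableOn
    (fun u : ℝ => 1 + 2 * u ^ (-(1/2:ℝ)) + 2 * (1-u) ^ (-(1/2:ℝ))) (Ioo (0:ℝ) 1) := by
  have h1 : IntervalIntegrable (fun x : ℝ => x ^ (-(1/2:ℝ))) volume 0 1 :=
    intervalIntegral.intervalIntegrable_rpow' (by norm_num)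
  have h2 : IntervalIntegrable (fun x : ℝ => (1-x) ^ (-(1/2:ℝ))) volume 0 1 :=
    ((intervalIntegral.intervalIntegrable_rpow' (r := -(1/2:ℝ)) (by norm_num) (a := 0) (b := 1)).comp_sub_left
      1).symm.mono_set (by norm_num)
  have e1 : IntegrableOn (fun x : ℝ => x ^ (-(1/2:ℝ))) (Ioo (0:ℝ) 1) :=
    (intervalIntegrable_iff_integrableOn_Ioo_of_le (by norm_num)).1 h1
  have e2 : IntegrableOn (fun x : ℝ => (1-x) ^ (-(1/2:ℝ))) (Ioo (0:ℝ) 1) :=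
    (intervalIntegrable_iff_integrableOn_Ioo_of_le (by norm_num)).1 h2
  exact ((integrableOn_const measure_Ioo_lt_top.ne).add (e1.const_mul 2)).add
    (e2.const_mul 2)

lemma integrableOn_logsin : IntegrableOn (fun u => Real.log (Real.sin (π*u))) (Ioo (0:ℝ) 1) := by
  apply Integrable.mono integrable_bnd
  · exact (Real.measurable_log.comp (Real.measurable_sin.comp
      (measurable_const.mul measurable_id))).aestronglyMeasurable
  · rw [ae_restrict_iff' measurableSet_Ioo]
    filter_upwards with u hu
    obtain ⟨h0, h1⟩ := hu
    have hs := sin_pos' h0 h1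
    have hlb := sin_lb h0 h1
    have hu1 : (0:ℝ) < 1 - u := by linarith
    have hb0 : (0:ℝ) < 2*u*(1-u) := by positivity
    have hle : Real.log (Real.sin (π*u)) ≤ 0 :=
      Real.log_nonpos (le_of_lt hs) (Real.sin_le_one _)
    have hmon : Real.log (2*u*(1-u)) ≤ Real.log (Real.sin (π*u)) :=
      Real.log_le_log hb0 hlb
    have hsplit : Real.log (2*u*(1-u)) = Real.log 2 + Real.log u + Real.log (1-u) := by
      rw [Real.log_mul (by positivity) (ne_of_gt hu1), Real.log_mul (by norm_num) (ne_of_gt h0)]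
    have n1 := neg_log_le h0
    have n2 := neg_log_le hu1
    have hlog2 : (0:ℝ) ≤ Real.log 2 := Real.log_nonneg (by norm_num)
    have hp1 : (0:ℝ) < u ^ (-(1/2:ℝ)) := Real.rpow_pos_of_pos h0 _
    have hp2 : (0:ℝ) < (1-u) ^ (-(1/2:ℝ)) := Real.rpow_pos_of_pos hu1 _
    rw [Real.norm_eq_abs, Real.norm_eq_abs, abs_of_nonpos hle, abs_of_pos (by positivity)]
    linarith

lemma intInt_logsin : IntervalIntegrable (fun u => Real.log (Real.sin (π*u))) volume 0 1 := by
  rw [intervalIntegrable_iff_integrableOn_Ioo_of_le (by norm_num)]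
  exact integrableOn_logsin

lemma integral_logsin : ∫ u in (0:ℝ)..1, Real.log (Real.sin (π*u)) = -Real.log 2 := by
  set f : ℝ → ℝ := fun u => Real.log (Real.sin (π*u)) with hf
  have hsub : Set.uIcc (0:ℝ) (1/2) ⊆ Set.uIcc (0:ℝ) 1 := by
    rw [uIcc_of_le (by norm_num : (0:ℝ) ≤ 1/2), uIcc_of_le (by norm_num : (0:ℝ) ≤ 1)]
    exact Icc_subset_Icc le_rfl (by norm_num)
  have hsub2 : Set.uIcc (1/2:ℝ) 1 ⊆ Set.uIcc (0:ℝ) 1 := by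
    rw [uIcc_of_le (by norm_num : (1/2:ℝ) ≤ 1), uIcc_of_le (by norm_num : (0:ℝ) ≤ 1)]
    exact Icc_subset_Icc (by norm_num) le_rfl
  have hf01 : IntervalIntegrable f volume 0 (1/2) := intInt_logsin.mono_set hsub
  have hf12 : IntervalIntegrable f volume (1/2) 1 := intInt_logsin.mono_set hsub2
  set A : ℝ := ∫ t in (0:ℝ)..(1/2), f t with hA
  -- reflection symmetry : f (1 - x) = f x
  have hrefl : ∀ x : ℝ, f (1 - x) = f x := by
    intro x; simp only [hf]
    rw [show π*(1-x) = π - π*x by ring, Real.sin_pi_sub]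
  -- second half equals A
  have hhalf : ∫ u in (1/2:ℝ)..1, f u = A := by
    have h1 : ∫ x in (1/2:ℝ)..1, f (1 - x) = ∫ x in (1-1:ℝ)..(1-1/2), f x :=
      intervalIntegral.integral_comp_sub_left f 1
    rw [intervalIntegral.integral_congr (g := fun x => f (1-x))
      (fun x _ => (hrefl x).symm)] at *
    rw [h1]; norm_num [hA]
  have hJ : ∫ u in (0:ℝ)..1, f u = 2 * A := by
    rw [← intervalIntegral.integral_add_adjacent_intervals hf01 hf12, hhalf, hA]; ring
  -- duplication
  have hcomp : IntervalIntegrable (fun x => f (x * (1/2))) volume 0 1 := by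
    have := hf01.comp_mul_right (c := 1/2)
    norm_num at this; exact this
  have hcompval : ∫ x in (0:ℝ)..1, f (x * (1/2)) = 2 * A := by
    norm_num
    exact hA.symm
  have hcomp2 : IntervalIntegrable (fun x => f ((1 - x) * (1/2))) volume 0 1 := by
    have := (hcomp.comp_sub_left 1).symm
    norm_num at this; exact this
  have hcomp2val : ∫ x in (0:ℝ)..1, f ((1 - x) * (1/2)) = 2 * A := by
    have h := intervalIntegral.integral_comp_sub_left (fun x => f (x * (1/2))) 1 (a := 0) (b := 1)
    norm_num at h ⊢
    rw [h, hA]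
  have hdup : ∫ u in (0:ℝ)..1, f u
      = ∫ u in (0:ℝ)..1, (Real.log 2 + f (u * (1/2)) + f ((1 - u) * (1/2))) := by
    apply intervalIntegral.integral_congr_ae
    have h1 : ∀ᵐ x : ℝ, x ≠ 1 := by
      rw [ae_iff]; simpa using Real.volume_singleton (a := 1)
    filter_upwards [h1] with u hu1 hu
    rw [uIoc_of_le (by norm_num : (0:ℝ) ≤ 1)] at hu
    have h0 : 0 < u := hu.1
    have h1' : u < 1 := lt_of_le_of_ne hu.2 hu1
    have hπ := Real.pi_pos
    have hs : 0 < Real.sin (π*(u*(1/2))) :=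
      Real.sin_pos_of_pos_of_lt_pi (by positivity) (by nlinarith)
    have hc : 0 < Real.cos (π*(u*(1/2))) :=
      Real.cos_pos_of_mem_Ioo ⟨by nlinarith, by nlinarith⟩
    have hdouble : Real.sin (π*u) = 2 * Real.sin (π*(u*(1/2))) * Real.cos (π*(u*(1/2))) := by
      rw [← Real.sin_two_mul]; ring_nf
    have hcos : f ((1-u)*(1/2)) = Real.log (Real.cos (π*(u*(1/2)))) := by
      simp only [hf]
      rw [show π*((1-u)*(1/2)) = π/2 - π*(u*(1/2)) by ring, Real.sin_pi_div_two_sub]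
    simp only [hf] at *
    rw [hdouble, Real.log_mul (by positivity) (ne_of_gt hc),
      Real.log_mul (by norm_num) (ne_of_gt hs), hcos]
  have hsplit : ∫ u in (0:ℝ)..1, (Real.log 2 + f (u * (1/2)) + f ((1 - u) * (1/2)))
      = Real.log 2 + 2 * A + 2 * A := by
    rw [intervalIntegral.integral_add (intervalIntegrable_const.add hcomp) hcomp2,
      intervalIntegral.integral_add intervalIntegrable_const hcomp,
      hcompval, hcomp2val]
    simp
  have h2 := hJ
  rw [hdup, hsplit] at h2
  have hA2 : 2 * A = -Real.log 2 := by linarith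
  exact hJ.trans hA2

noncomputable def Fant (u : ℝ) : ℝ := 2*Real.log u - 2*(1-u)*Real.log (Real.sin (π*u))

lemma hasDerivAt_F {x : ℝ} (h0 : 0 < x) (h1 : x < 1) :
    HasDerivAt Fant
      ((-(2*π)*(1-x)*Real.cot (π*x) + 2/x) + 2*Real.log (Real.sin (π*x))) x := by
  have hs := sin_pos' h0 h1
  have d1 : HasDerivAt (fun u : ℝ => Real.log u) x⁻¹ x := Real.hasDerivAt_log (ne_of_gt h0)
  have dlin : HasDerivAt (fun u : ℝ => π*u) π x := by
    simpa using (hasDerivAt_id x).const_mul π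
  have dsin : HasDerivAt (fun u : ℝ => Real.sin (π*u)) (Real.cos (π*x) * π) x := dlin.sin
  have dlogsin : HasDerivAt (fun u : ℝ => Real.log (Real.sin (π*u)))
      (Real.cos (π*x) * π / Real.sin (π*x)) x := dsin.log (ne_of_gt hs)
  have done' : HasDerivAt (fun u : ℝ => 1 - u) (-1) x := by
    simpa using (hasDerivAt_id x).const_sub 1
  have dprod := done'.mul dlogsin
  have dd := (d1.const_mul 2).sub (dprod.const_mul 2)
  unfold Fant
  refine (dd.congr_of_eventuallyEq (Filter.Eventually.of_forall fun u => ?_)).congr_deriv ?_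
  · simp only [Pi.sub_apply, Pi.mul_apply]; ring
  · rw [Real.cot_eq_cos_div_sin]
    field_simp
    ring

lemma tendsto_sin_div : Tendsto (fun u : ℝ => Real.sin (π*u) / u) (𝓝[>] 0) (𝓝 π) := by
  have dlin : HasDerivAt (fun u : ℝ => π*u) π 0 := by
    simpa using (hasDerivAt_id (0:ℝ)).const_mul π
  have dsin : HasDerivAt (fun u : ℝ => Real.sin (π*u)) (Real.cos (π*0) * π) 0 := dlin.sin
  have h := hasDerivAt_iff_tendsto_slope.1 dsin
  rw [show Real.cos (π*0) * π = π by simp] at h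
  have h2 : Tendsto (slope (fun u : ℝ => Real.sin (π*u)) 0) (𝓝[>] 0) (𝓝 π) :=
    h.mono_left (nhdsWithin_mono _ (fun x hx => ne_of_gt hx))
  apply h2.congr'
  filter_upwards [self_mem_nhdsWithin] with u hu
  rw [slope_def_field]
  simp

lemma tendsto_L : Tendsto (fun u : ℝ => Real.log (Real.sin (π*u) / u)) (𝓝[>] 0)
    (𝓝 (Real.log π)) :=
  ((Real.continuousAt_log (ne_of_gt Real.pi_pos)).tendsto).comp tendsto_sin_div

lemma tendsto_T0 : Tendsto (fun v : ℝ => v * Real.log (Real.sin (π*v))) (𝓝[>] 0) (𝓝 0) := by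
  have hv : Tendsto (fun v : ℝ => v) (𝓝[>] (0:ℝ)) (𝓝 0) := tendsto_id.mono_left nhdsWithin_le_nhds
  have h1 : Tendsto (fun v : ℝ => v * Real.log (Real.sin (π*v) / v)) (𝓝[>] 0) (𝓝 0) := by
    have := hv.mul tendsto_L
    simpa using this
  have h2 : Tendsto (fun v : ℝ => v * Real.log v) (𝓝[>] (0:ℝ)) (𝓝 0) := by
    have := (Real.continuous_mul_log.tendsto 0).mono_left
      (nhdsWithin_le_nhds (a := (0:ℝ)) (s := Set.Ioi 0))
    simpa using this
  have h3 := h1.add h2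
  rw [add_zero] at h3
  apply h3.congr'
  filter_upwards [Ioo_mem_nhdsGT_of_mem (Set.left_mem_Ico.2 zero_lt_one)] with v hv'
  obtain ⟨hv0, hv1⟩ := hv'
  have hs := sin_pos' hv0 hv1
  rw [Real.log_div (ne_of_gt hs) (ne_of_gt hv0)]
  ring

lemma tendsto_F0 : Tendsto Fant (𝓝[>] 0) (𝓝 (-2 * Real.log π)) := by
  have h1 : Tendsto (fun u : ℝ => -2 * Real.log (Real.sin (π*u) / u)
      + 2 * (u * Real.log (Real.sin (π*u)))) (𝓝[>] 0) (𝓝 (-2 * Real.log π)) := by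
    have := ((tendsto_L.const_mul (-2)).add (tendsto_T0.const_mul 2))
    simpa using this
  apply h1.congr'
  filter_upwards [Ioo_mem_nhdsGT_of_mem (Set.left_mem_Ico.2 zero_lt_one)] with u hu
  obtain ⟨h0, h1'⟩ := hu
  have hs := sin_pos' h0 h1'
  unfold Fant
  rw [Real.log_div (ne_of_gt hs) (ne_of_gt h0)]
  ring

lemma tendsto_F1 : Tendsto Fant (𝓝[<] 1) (𝓝 0) := by
  have hmap : Tendsto (fun u : ℝ => 1 - u) (𝓝[<] (1:ℝ)) (𝓝[>] (0:ℝ)) := by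
    apply tendsto_nhdsWithin_of_tendsto_nhds_of_eventually_within
    · have : Tendsto (fun u : ℝ => 1 - u) (𝓝 (1:ℝ)) (𝓝 0) := by
        simpa using (continuous_sub_left (1:ℝ)).tendsto 1
      exact this.mono_left nhdsWithin_le_nhds
    · filter_upwards [self_mem_nhdsWithin] with u hu
      simp only [Set.mem_Iio] at hu
      simp [Set.mem_Ioi]; linarith
  have h2 : Tendsto (fun u : ℝ => (1-u) * Real.log (Real.sin (π*(1-u)))) (𝓝[<] 1) (𝓝 0) :=
    tendsto_T0.comp hmap
  have h1 : Tendsto (fun u : ℝ => 2 * Real.log u) (𝓝[<] (1:ℝ)) (𝓝 0) := by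
    have := ((Real.continuousAt_log (by norm_num : (1:ℝ) ≠ 0)).tendsto.const_mul 2).mono_left
      (nhdsWithin_le_nhds (a := (1:ℝ)) (s := Set.Iio 1))
    simpa using this
  have h3 := h1.sub (h2.const_mul 2)
  norm_num at h3
  apply h3.congr
  intro u
  unfold Fant
  rw [show π*(1-u) = π - π*u by ring, Real.sin_pi_sub]
  ring

noncomputable def g0fun (u : ℝ) : ℝ := -(2*π)*(1-u)*Real.cot (π*u) + 2/u

lemma g0_meas : Measurable g0fun := by
  have h : g0fun = fun u => -(2*π)*(1-u)*(Real.cos (π*u)/Real.sin (π*u)) + 2/u := by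
    funext u; rw [g0fun, Real.cot_eq_cos_div_sin]
  rw [h]
  apply Measurable.add
  · exact (measurable_const.mul (measurable_const.sub measurable_id)).mul
      ((Real.measurable_cos.comp (measurable_const.mul measurable_id)).div
       (Real.measurable_sin.comp (measurable_const.mul measurable_id)))
  · exact measurable_const.div measurable_id

lemma sin_ge_2u {u : ℝ} (h0 : 0 ≤ u) (h2 : u ≤ 1/2) : 2*u ≤ Real.sin (π*u) := by
  have hπ := Real.pi_pos
  have := Real.mul_le_sin (x := π*u) (by positivity) (by nlinarith)
  calc 2*u = 2/π * (π*u) := by field_simp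
    _ ≤ _ := this

lemma g0_bound0 {u : ℝ} (h0 : 0 < u) (h4 : u ≤ 1/4) : |g0fun u| ≤ 12 := by
  have hπ := Real.pi_pos
  have hπ4 := Real.pi_le_four
  set x := π*u with hx
  have hx0 : 0 < x := by positivity
  have hx1 : x ≤ 1 := by nlinarith
  have hs2u : 2*u ≤ Real.sin x := sin_ge_2u (le_of_lt h0) (by linarith)
  have hs0 : 0 < Real.sin x := by nlinarith
  have hsx : Real.sin x ≤ x := le_of_lt (Real.sin_lt hx0)
  have hcl : Real.cos x ≤ 1 := Real.cos_le_one x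
  have hcg : 1 - x^2/2 ≤ Real.cos x := Real.one_sub_sq_div_two_le_cos
  have hcube : x - x^3/4 < Real.sin x := by have := Real.sin_gt_sub_cube hx0; nlinarith [pow_pos hx0 3]
  have hgeq : g0fun u = (2*Real.sin x - 2*x*(1-u)*Real.cos x) / (u * Real.sin x) := by
    rw [g0fun, Real.cot_eq_cos_div_sin, ← hx]
    field_simp
    ring
  have hnum : |2*Real.sin x - 2*x*(1-u)*Real.cos x| ≤ 24*u^2 := by
    rw [abs_le]
    constructor
    · nlinarith [sq_nonneg x, sq_nonneg u, mul_pos hx0 h0]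
    · nlinarith [sq_nonneg x, sq_nonneg u, mul_pos hx0 h0, sq_nonneg (x*u)]
  have hden : 2*u^2 ≤ u * Real.sin x := by nlinarith
  have hdenpos : 0 < u * Real.sin x := by positivity
  rw [hgeq, abs_div, abs_of_pos hdenpos, div_le_iff₀ hdenpos]
  nlinarith

lemma g0_bound1 {u : ℝ} (h3 : 3/4 ≤ u) (h1 : u < 1) : |g0fun u| ≤ 12 := by
  have hπ := Real.pi_pos
  have hπ4 := Real.pi_le_four
  set v := 1 - u with hv
  have hv0 : 0 < v := by simp [hv]; linarith
  have hv4 : v ≤ 1/4 := by simp [hv]; linarith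
  have hs2v : 2*v ≤ Real.sin (π*v) := sin_ge_2u (le_of_lt hv0) (by linarith)
  have hs0 : 0 < Real.sin (π*v) := by nlinarith
  have hcos : Real.cos (π*u) = -Real.cos (π*v) := by
    rw [show π*u = π - π*v by rw [hv]; ring, Real.cos_pi_sub]
  have hsin : Real.sin (π*u) = Real.sin (π*v) := by
    rw [show π*u = π - π*v by rw [hv]; ring, Real.sin_pi_sub]
  have hcnn : 0 ≤ Real.cos (π*v) := by
    apply Real.cos_nonneg_of_mem_Icc
    constructor <;> nlinarith
  have hcle : Real.cos (π*v) ≤ 1 := Real.cos_le_one _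
  have hgeq : g0fun u = 2*π*v * (Real.cos (π*v) / Real.sin (π*v)) + 2/u := by
    rw [g0fun, Real.cot_eq_cos_div_sin, hcos, hsin, ← hv]
    field_simp
  have ht1 : 0 ≤ 2*π*v * (Real.cos (π*v) / Real.sin (π*v)) := by positivity
  have ht2 : 2*π*v * (Real.cos (π*v) / Real.sin (π*v)) ≤ π := by
    rw [mul_div_assoc']
    rw [div_le_iff₀ hs0]
    nlinarith [mul_nonneg (mul_nonneg (by positivity : (0:ℝ) ≤ 2*π) hv0.le)
      (sub_nonneg.2 hcle), mul_le_mul_of_nonneg_left hs2v hπ.le]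
  have hu0 : (0:ℝ) < u := by linarith
  have h2u : 0 < 2/u := by positivity
  have h2u8 : 2/u ≤ 8/3 := by rw [div_le_div_iff₀ hu0 (by norm_num)]; linarith
  rw [hgeq, abs_of_pos (by linarith)]
  linarith

lemma g0_contOn : ContinuousOn g0fun (Icc (1/4:ℝ) (3/4)) := by
  have h : ∀ u ∈ Icc (1/4:ℝ) (3/4), Real.sin (π*u) ≠ 0 := by
    intro u hu
    have hπ := Real.pi_pos
    exact ne_of_gt (Real.sin_pos_of_pos_of_lt_pi (by nlinarith [hu.1]) (by nlinarith [hu.2]))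
  have heq : ∀ u ∈ Icc (1/4:ℝ) (3/4), g0fun u
      = -(2*π)*(1-u)*(Real.cos (π*u)/Real.sin (π*u)) + 2/u := by
    intro u hu; rw [g0fun, Real.cot_eq_cos_div_sin]
  apply ContinuousOn.congr _ heq
  apply ContinuousOn.add
  · apply ContinuousOn.mul
    · exact (continuous_const.mul (continuous_const.sub continuous_id)).continuousOn
    · exact ContinuousOn.div
        (Real.continuous_cos.comp (continuous_const.mul continuous_id)).continuousOn
        (Real.continuous_sin.comp (continuous_const.mul continuous_id)).continuousOn h
  · exact ContinuousOn.div continuous_const.continuousOn continuous_id.continuousOn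
      (fun u hu => by intro h0; rw [h0] at hu; norm_num at hu)

lemma g0_int : IntegrableOn g0fun (Ioo (0:ℝ) 1) := by
  have i1 : IntegrableOn g0fun (Ioc (0:ℝ) (1/4)) := by
    apply Measure.integrableOn_of_bounded (M := 12) (by simp) g0_meas.aestronglyMeasurable
    rw [ae_restrict_iff' measurableSet_Ioc]
    filter_upwards with u hu
    rw [Real.norm_eq_abs]
    exact g0_bound0 hu.1 hu.2
  have i2 : IntegrableOn g0fun (Icc (1/4:ℝ) (3/4)) := g0_contOn.integrableOn_Icc
  have i3 : IntegrableOn g0fun (Ico (3/4:ℝ) 1) := by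
    apply Measure.integrableOn_of_bounded (M := 12) (by simp) g0_meas.aestronglyMeasurable
    rw [ae_restrict_iff' measurableSet_Ico]
    filter_upwards with u hu
    rw [Real.norm_eq_abs]
    exact g0_bound1 hu.1 hu.2
  apply ((i1.union i2).union i3).mono_set
  intro u hu
  rcases le_or_gt u (1/4) with h | h
  · exact Or.inl (Or.inl ⟨hu.1, h⟩)
  rcases le_or_gt u (3/4) with h' | h'
  · exact Or.inl (Or.inr ⟨le_of_lt h, h'⟩)
  · exact Or.inr ⟨le_of_lt h', hu.2⟩

noncomputable def phi (u : ℝ) : ℝ := g0fun u + 2*Real.log (Real.sin (π*u))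

lemma phi_int : IntegrableOn phi (Ioo (0:ℝ) 1) :=
  g0_int.add (integrableOn_logsin.const_mul 2)

noncomputable def cseq (n : ℕ) : ℝ := ((n:ℝ)+2)⁻¹

lemma cseq_pos (n : ℕ) : 0 < cseq n := by rw [cseq]; positivity

lemma cseq_le_half (n : ℕ) : cseq n ≤ 1/2 := by
  rw [cseq, show (1:ℝ)/2 = (2:ℝ)⁻¹ by norm_num]
  apply inv_anti₀ (by norm_num)
  have : (0:ℝ) ≤ (n:ℝ) := Nat.cast_nonneg n
  linarith

lemma cseq_anti : Antitone cseq := by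
  intro a b hab
  rw [cseq, cseq]
  apply inv_anti₀ (by positivity)
  exact add_le_add_left (Nat.cast_le.2 hab) 2

lemma cseq_tendsto : Tendsto cseq atTop (𝓝 0) := by
  apply Tendsto.inv_tendsto_atTop
  apply Filter.tendsto_atTop_add_const_right
  exact tendsto_natCast_atTop_atTop

lemma key (n : ℕ) : ∫ u in Ioo (cseq n) (1 - cseq n), phi u
    = Fant (1 - cseq n) - Fant (cseq n) := by
  have hc0 := cseq_pos n
  have hch := cseq_le_half n
  have hab : cseq n ≤ 1 - cseq n := by linarith
  have hsub : Ioc (cseq n) (1 - cseq n) ⊆ Ioo (0:ℝ) 1 := by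
    intro x hx
    exact ⟨lt_trans hc0 hx.1, lt_of_le_of_lt hx.2 (by linarith)⟩
  have hint : IntervalIntegrable phi volume (cseq n) (1 - cseq n) := by
    rw [intervalIntegrable_iff_integrableOn_Ioc_of_le hab]
    exact phi_int.mono_set hsub
  have hderiv : ∀ x ∈ Set.uIcc (cseq n) (1 - cseq n), HasDerivAt Fant (phi x) x := by
    intro x hx
    rw [uIcc_of_le hab] at hx
    have h0x : 0 < x := lt_of_lt_of_le hc0 hx.1
    have h1x : x < 1 := lt_of_le_of_lt hx.2 (by linarith)
    have := hasDerivAt_F h0x h1x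
    simpa [phi, g0fun] using this
  have := intervalIntegral.integral_eq_sub_of_hasDerivAt hderiv hint
  rw [← this, intervalIntegral.integral_of_le hab, integral_Ioc_eq_integral_Ioo]

lemma union_eq : (⋃ n, Ioo (cseq n) (1 - cseq n)) = Ioo (0:ℝ) 1 := by
  apply Set.Subset.antisymm
  · apply Set.iUnion_subset
    intro n x hx
    have hc0 := cseq_pos n
    exact ⟨lt_trans hc0 hx.1, lt_trans hx.2 (by linarith)⟩
  · intro x hx
    obtain ⟨hx0, hx1⟩ := hx
    set ε := min x (1-x) with hε
    have hε0 : 0 < ε := lt_min hx0 (by linarith)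
    obtain ⟨n, hn⟩ := exists_nat_gt (1/ε)
    have hpos : (0:ℝ) < (n:ℝ)+2 := by positivity
    have h2 : 1/ε < (n:ℝ)+2 := lt_of_lt_of_le hn (by linarith)
    have h1 : cseq n < ε := by
      rw [cseq]
      have hmul : ε * (1/ε) < ε * ((n:ℝ)+2) := by
        exact mul_lt_mul_of_pos_left h2 hε0
      rw [mul_one_div, div_self (ne_of_gt hε0)] at hmul
      have hinv : ((n:ℝ)+2) * ((n:ℝ)+2)⁻¹ = 1 := mul_inv_cancel₀ (ne_of_gt hpos)
      nlinarith
    have hεx : ε ≤ x := min_le_left _ _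
    have hεx2 : ε ≤ 1 - x := min_le_right _ _
    exact Set.mem_iUnion.2 ⟨n, by constructor <;> [linarith; linarith]⟩

lemma integral_phi : ∫ u in Ioo (0:ℝ) 1, phi u = 2 * Real.log π := by
  have hmono : Monotone (fun n => Ioo (cseq n) (1 - cseq n)) := by
    intro a b hab
    apply Ioo_subset_Ioo (cseq_anti hab) (by linarith [cseq_anti hab])
  have hmeas : ∀ n, MeasurableSet (Ioo (cseq n) (1 - cseq n)) := fun n => measurableSet_Ioo
  have hint : IntegrableOn phi (⋃ n, Ioo (cseq n) (1 - cseq n)) := by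
    rw [union_eq]; exact phi_int
  have ht := tendsto_setIntegral_of_monotone hmeas hmono hint
  rw [union_eq] at ht
  have hc1 : Tendsto cseq atTop (𝓝[>] 0) := by
    apply tendsto_nhdsWithin_of_tendsto_nhds_of_eventually_within _ cseq_tendsto
    filter_upwards with n
    exact cseq_pos n
  have hc2 : Tendsto (fun n => 1 - cseq n) atTop (𝓝[<] 1) := by
    apply tendsto_nhdsWithin_of_tendsto_nhds_of_eventually_within
    · have := cseq_tendsto.const_sub 1
      simpa using this
    · filter_upwards with n
      simp only [Set.mem_Iio]
      linarith [cseq_pos n]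
  have ht2 : Tendsto (fun n => Fant (1 - cseq n) - Fant (cseq n)) atTop
      (𝓝 (0 - (-2 * Real.log π))) :=
    (tendsto_F1.comp hc2).sub (tendsto_F0.comp hc1)
  have heq : (fun n => ∫ u in Ioo (cseq n) (1 - cseq n), phi u)
      = fun n => Fant (1 - cseq n) - Fant (cseq n) := funext key
  rw [heq] at ht
  have := tendsto_nhds_unique ht ht2
  rw [this]; ring

lemma integral_g0 : ∫ u in Ioo (0:ℝ) 1, g0fun u = 2 * Real.log (2*π) := by
  have hadd : ∫ u in Ioo (0:ℝ) 1, phi u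
      = (∫ u in Ioo (0:ℝ) 1, g0fun u) + ∫ u in Ioo (0:ℝ) 1, 2*Real.log (Real.sin (π*u)) := by
    exact integral_add g0_int (integrableOn_logsin.const_mul 2)
  have hlog : ∫ u in Ioo (0:ℝ) 1, 2*Real.log (Real.sin (π*u)) = 2 * (-Real.log 2) := by
    rw [integral_const_mul, ← integral_Ioc_eq_integral_Ioo,
      ← intervalIntegral.integral_of_le (by norm_num : (0:ℝ) ≤ 1), integral_logsin]
  rw [integral_phi, hlog] at hadd
  have h2π : Real.log (2*π) = Real.log 2 + Real.log π :=
    Real.log_mul (by norm_num) (ne_of_gt Real.pi_pos)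
  rw [h2π]; linarith

theorem stmt3 (m : ℝ) (hm : 0 < m) :
    IntegrableOn
      (fun u : ℝ => -(2 * π / m) * (1 - u) * Real.cot (π * u) + 2 / (m * u))
      (Set.Ioo (0 : ℝ) 1) ∧
    ∫ u in Set.Ioo (0 : ℝ) 1,
        (-(2 * π / m) * (1 - u) * Real.cot (π * u) + 2 / (m * u)) =
      2 * Real.log (2 * π) / m := by
  have hm' : m ≠ 0 := ne_of_gt hm
  have hfun : (fun u : ℝ => -(2 * π / m) * (1 - u) * Real.cot (π * u) + 2 / (m * u))
      = fun u => m⁻¹ * g0fun u := by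
    funext u
    rw [g0fun]
    ring
  rw [hfun]
  constructor
  · exact g0_int.const_mul m⁻¹
  · rw [integral_const_mul, integral_g0]
    ring
end

section
/- For a positive integer n and a complex number m with Re(m) > 0, the following identity holds: ∑_{j=1}^{k} m^{-j} H_j(n)/(k-j)! = (1/k!) ∫_0^1 ( -1 + (1 - (log u)/m)^k ) · (1 + n u^{n+1} - (n+1) u^n)/(1-u)² du, where k is a positive integer and H_j(n) = ∑_{q=1}^{n} q^{-j} is the generalized harmonic number. -/
open MeasureTheory Complex

open Set Filter in
private lemma aux_image_exp_neg :
    (fun t : ℝ => Real.exp (-t)) '' Set.Ioi 0 = Set.Ioo (0:ℝ) 1 := by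
  ext x
  constructor
  · rintro ⟨t, ht, rfl⟩
    exact ⟨Real.exp_pos _, by rw [Real.exp_lt_one_iff]; simpa using ht⟩
  · rintro ⟨hx0, hx1⟩
    refine ⟨-Real.log x, ?_, by simp [Real.exp_log hx0]⟩
    simpa using Real.log_neg hx0 hx1

open Set Filter in
private lemma aux_deriv : ∀ t ∈ Set.Ioi (0:ℝ),
    HasDerivWithinAt (fun t : ℝ => Real.exp (-t)) (-Real.exp (-t)) (Set.Ioi 0) t := by
  intro t _
  simpa [Function.comp_def] using (((Real.hasDerivAt_exp (-t)).comp t (hasDerivAt_neg t))).hasDerivWithinAt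

private lemma aux_inj : Set.InjOn (fun t : ℝ => Real.exp (-t)) (Set.Ioi 0) :=
  (Real.exp_injective.comp neg_injective).injOn

open Set Filter in
private lemma aux_eq_on (q i : ℕ) (hq : 0 < q) : ∀ t : ℝ,
    |(-Real.exp (-t))| • ((Real.exp (-t)) ^ (q-1) * (-Real.log (Real.exp (-t))) ^ i)
      = t ^ i * Real.exp (-((q:ℝ)*t)) := by
  intro t
  rw [abs_neg, abs_of_pos (Real.exp_pos _), Real.log_exp, neg_neg, smul_eq_mul,
    ← mul_assoc, ← pow_succ', Nat.sub_add_cancel hq, ← Real.exp_nat_mul]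
  ring_nf

open Set Filter in
private lemma h_integrable (q i : ℕ) (hq : 0 < q) :
    IntegrableOn (fun t : ℝ => t ^ i * Real.exp (-((q:ℝ)*t))) (Set.Ioi 0) := by
  have hq' : (0:ℝ) < q := by exact_mod_cast hq
  apply integrable_of_isBigO_exp_neg (b := q/2) (by positivity)
    (by fun_prop)
  have h1 : Tendsto (fun t : ℝ => t ^ i * Real.exp (-((q:ℝ)/2*t))) atTop (nhds 0) := by
    refine (tendsto_rpow_mul_exp_neg_mul_atTop_nhds_zero i ((q:ℝ)/2) (by positivity)).congr' ?_
    filter_upwards [eventually_gt_atTop (0:ℝ)] with t ht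
    rw [Real.rpow_natCast, neg_mul]
  have h2 := (h1.isBigO_one ℝ).mul
    (Asymptotics.isBigO_refl (fun t : ℝ => Real.exp (-((q:ℝ)/2*t))) atTop)
  refine (h2.congr (fun t => ?_) (fun t => ?_))
  · rw [mul_assoc, ← Real.exp_add]
    congr 1
    ring
  · rw [one_mul, neg_mul]

open Set Filter in
private lemma real_integrable (q i : ℕ) (hq : 0 < q) :
    IntegrableOn (fun x : ℝ => x ^ (q-1) * (-Real.log x) ^ i) (Set.Ioo (0:ℝ) 1) := by
  rw [← aux_image_exp_neg,
    integrableOn_image_iff_integrableOn_abs_deriv_smul measurableSet_Ioi aux_deriv aux_inj]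
  exact (h_integrable q i hq).congr_fun (fun t _ => (aux_eq_on q i hq t).symm) measurableSet_Ioi

open Set Filter in
private lemma real_int (q i : ℕ) (hq : 0 < q) :
    (∫ x in Set.Ioo (0:ℝ) 1, x ^ (q-1) * (-Real.log x) ^ i)
      = (Nat.factorial i : ℝ) / (q:ℝ) ^ (i+1) := by
  have hq' : (0:ℝ) < q := by exact_mod_cast hq
  rw [← aux_image_exp_neg,
    integral_image_eq_integral_abs_deriv_smul measurableSet_Ioi aux_deriv aux_inj]
  calc ∫ t in Set.Ioi (0:ℝ),
        |(-Real.exp (-t))| • ((Real.exp (-t)) ^ (q-1) * (-Real.log (Real.exp (-t))) ^ i)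
      = ∫ t in Set.Ioi (0:ℝ), t ^ (((i:ℝ)+1)-1) * Real.exp (-((q:ℝ)*t)) := by
        refine setIntegral_congr_fun measurableSet_Ioi fun t _ => ?_
        rw [aux_eq_on q i hq t, add_sub_cancel_right, Real.rpow_natCast]
    _ = (1/(q:ℝ)) ^ (((i:ℝ))+1) * Real.Gamma ((i:ℝ)+1) :=
        Real.integral_rpow_mul_exp_neg_mul_Ioi (by positivity) hq'
    _ = _ := by
        rw [Real.Gamma_nat_eq_factorial, show ((i:ℝ)+1) = ((i+1:ℕ):ℝ) by push_cast; ring,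
          Real.rpow_natCast]
        field_simp
        rw [← mul_pow, one_div_mul_cancel hq'.ne', one_pow]

private lemma poly_id (x : ℂ) (nn : ℕ) :
    (1-x)^2 * ∑ q ∈ Finset.Icc 1 nn, (q:ℂ) * x^(q-1)
      = 1 + nn*x^(nn+1) - (nn+1)*x^nn := by
  induction nn with
  | zero => simp
  | succ p ih =>
    rw [Finset.sum_Icc_succ_top (by omega : 1 ≤ p+1), mul_add, ih]
    push_cast
    ring

theorem stmt19 (k n : ℕ) (hk : 0 < k) (hn : 0 < n) (m : ℂ) (hm : 0 < m.re) :
    ∑ j ∈ Finset.Icc 1 k,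
        m ^ (-(j : ℤ)) * (∑ q ∈ Finset.Icc 1 n, (q : ℂ) ^ (-(j : ℤ))) /
          (Nat.factorial (k - j) : ℂ) =
      (1 / (Nat.factorial k : ℂ)) *
        ∫ u in Set.Ioo (0 : ℝ) 1,
          (-1 + (1 - (Real.log u : ℂ) / m) ^ k) *
            (1 + n * (u : ℂ) ^ (n + 1) - (n + 1) * (u : ℂ) ^ n) / (1 - (u : ℂ)) ^ 2 := by
  have hm0 : m ≠ 0 := by
    intro h; rw [h] at hm; simp at hm
  have key : ∀ u ∈ Set.Ioo (0:ℝ) 1,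
      (-1 + (1 - (Real.log u : ℂ) / m) ^ k) *
          (1 + n * (u : ℂ) ^ (n + 1) - (n + 1) * (u : ℂ) ^ n) / (1 - (u : ℂ)) ^ 2
      = ∑ q ∈ Finset.Icc 1 n, ∑ i ∈ Finset.Icc 1 k,
          ((q:ℂ) * (k.choose i) * (m⁻¹)^i) * (((u^(q-1) * (-Real.log u)^i : ℝ) : ℂ)) := by
    intro u hu
    have hu1 : (1:ℂ) - u ≠ 0 := by
      rw [sub_ne_zero]
      exact_mod_cast hu.2.ne'
    have hA : (-1 + (1 - (Real.log u : ℂ)/m)^k)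
        = ∑ i ∈ Finset.Icc 1 k, ((-(Real.log u : ℂ))/m)^i * (k.choose i) := by
      rw [show (1 - (Real.log u : ℂ)/m) = (-(Real.log u:ℂ)/m) + 1 by ring, add_pow]
      simp only [one_pow, mul_one]
      rw [Finset.range_eq_Ico, Finset.sum_eq_sum_Ico_succ_bot (Nat.succ_pos k)]
      simp only [pow_zero, Nat.choose_zero_right, Nat.cast_one, one_mul]
      rw [zero_add, Nat.succ_eq_add_one, Finset.Ico_add_one_right_eq_Icc]
      exact neg_add_cancel_left 1 _
    have hB := poly_id (u:ℂ) n
    rw [hA, ← hB, mul_comm ((1-(u:ℂ))^2) _, ← mul_assoc, mul_div_assoc,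
      div_self (pow_ne_zero 2 hu1), mul_one, mul_comm, Finset.sum_mul_sum]
    refine Finset.sum_congr rfl fun q hq => Finset.sum_congr rfl fun i hi => ?_
    rw [div_eq_mul_inv, mul_pow]
    push_cast
    ring
  have hInt1 : ∀ q i : ℕ, 0 < q → Integrable (fun u : ℝ =>
      ((q:ℂ) * (k.choose i) * (m⁻¹)^i) * (((u^(q-1) * (-Real.log u)^i : ℝ) : ℂ)))
      (volume.restrict (Set.Ioo (0:ℝ) 1)) :=
    fun q i hq => ((real_integrable q i hq).ofReal.const_mul _)
  have hIcalc : (∫ u in Set.Ioo (0:ℝ) 1,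
        (-1 + (1 - (Real.log u : ℂ) / m) ^ k) *
          (1 + n * (u : ℂ) ^ (n + 1) - (n + 1) * (u : ℂ) ^ n) / (1 - (u : ℂ)) ^ 2)
      = ∑ q ∈ Finset.Icc 1 n, ∑ i ∈ Finset.Icc 1 k,
          ((q:ℂ) * (k.choose i) * (m⁻¹)^i) * ((i.factorial : ℂ) / (q:ℂ)^(i+1)) := by
    rw [setIntegral_congr_fun measurableSet_Ioo key]
    rw [integral_finset_sum _ (fun q hq => integrable_finset_sum _ (fun i _ =>
      hInt1 q i (Finset.mem_Icc.mp hq).1))]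
    refine Finset.sum_congr rfl fun q hq => ?_
    rw [integral_finset_sum _ (fun i _ => hInt1 q i (Finset.mem_Icc.mp hq).1)]
    refine Finset.sum_congr rfl fun i _ => ?_
    rw [integral_const_mul,
      show (∫ a in Set.Ioo (0:ℝ) 1, ((a ^ (q - 1) * (-Real.log a) ^ i : ℝ) : ℂ))
        = ((∫ a in Set.Ioo (0:ℝ) 1, a ^ (q - 1) * (-Real.log a) ^ i : ℝ) : ℂ) from
        integral_ofReal, real_int q i (Finset.mem_Icc.mp hq).1]
    push_cast
    ring
  rw [hIcalc, Finset.sum_comm, Finset.mul_sum]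
  refine Finset.sum_congr rfl fun i hi => ?_
  obtain ⟨hi1, hik⟩ := Finset.mem_Icc.mp hi
  have hfac : ((k - i).factorial : ℂ) ≠ 0 := by exact_mod_cast (Nat.factorial_pos _).ne'
  have hfk : ((k).factorial : ℂ) ≠ 0 := by exact_mod_cast (Nat.factorial_pos _).ne'
  have hfi : ((i).factorial : ℂ) ≠ 0 := by exact_mod_cast (Nat.factorial_pos _).ne'
  have hmp : m ^ i ≠ 0 := pow_ne_zero _ hm0
  have hsum : ∑ q ∈ Finset.Icc 1 n,
      ((q:ℂ) * (k.choose i) * (m⁻¹)^i) * ((i.factorial:ℂ)/(q:ℂ)^(i+1))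
      = ((k.choose i : ℂ) * (m⁻¹)^i * i.factorial) *
          ∑ q ∈ Finset.Icc 1 n, (q:ℂ)^(-(i:ℤ)) := by
    rw [Finset.mul_sum]
    refine Finset.sum_congr rfl fun q hq => ?_
    have hq0 : (q:ℂ) ≠ 0 := by
      have h1 := (Finset.mem_Icc.mp hq).1
      exact Nat.cast_ne_zero.mpr (by omega)
    rw [zpow_neg, zpow_natCast, pow_succ]
    field_simp
  rw [hsum, zpow_neg m, zpow_natCast, inv_pow, Nat.cast_choose ℂ hik]
  field_simp
end
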